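/- Let A be a unital C*-algebra and τ₀ a weight on A. Then the semicontinuous regularization τ(a) := sup{ψ(a) : ψ a positive linear functional on A with ψ ≤ τ₀ on A₊} satisfies: (i) τ is a weight on A₊ (additive and positively homogeneous) and is lower semicontinuous with respect to the norm topology on A₊; (ii) τ ≤ τ₀ on A₊, so every positive element with τ₀(a) < ∞ also satisfies τ(a) < ∞. -/

import Mathlib

open scoped ENNReal

variable {A : Type*} [CStarAlgebra A] [PartialOrder A] [StarOrderedRing A]

/-- A weight on a C*-algebra: `τ(λa + b) = λ τ(a) + τ(b)` for `λ > 0` and positive `a, b`. -/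
def IsWeight (τ : A → ℝ≥0∞) : Prop :=
  ∀ (c : ℝ), 0 < c → ∀ a b : A, 0 ≤ a → 0 ≤ b →
    τ ((c : ℂ) • a + b) = ENNReal.ofReal c * τ a + τ b

/-- A positive linear functional: it takes nonnegative real values on positive elements. -/
def IsPosFunctional (ψ : A →ₗ[ℂ] ℂ) : Prop :=
  ∀ a : A, 0 ≤ a → ∃ r : ℝ, 0 ≤ r ∧ ψ a = r

/-- `ψ ≤ τ₀` on the positive cone. -/
def DomBy (ψ : A →ₗ[ℂ] ℂ) (τ₀ : A → ℝ≥0∞) : Prop :=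
  ∀ a : A, 0 ≤ a → ENNReal.ofReal (ψ a).re ≤ τ₀ a

/-- The semicontinuous regularization `τ(a) = sup {ψ(a) : ψ positive linear functional, ψ ≤ τ₀}`. -/
noncomputable def reg (τ₀ : A → ℝ≥0∞) (a : A) : ℝ≥0∞ :=
  ⨆ (ψ : A →ₗ[ℂ] ℂ) (_ : IsPosFunctional ψ ∧ DomBy ψ τ₀), ENNReal.ofReal (ψ a).re

namespace Stmt4Aux

lemma real_smul_eq (c : ℝ) (x : A) : (c : ℂ) • x = c • x := by
  rw [← Complex.coe_algebraMap, algebraMap_smul]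

variable {τ₀ : A → ℝ≥0∞}

lemma weight_add (hτ₀ : IsWeight τ₀) {x y : A} (hx : 0 ≤ x) (hy : 0 ≤ y) :
    τ₀ (x + y) = τ₀ x + τ₀ y := by
  have h := hτ₀ 1 one_pos x y hx hy
  simpa [Complex.ofReal_one, one_smul, ENNReal.ofReal_one, one_mul] using h

lemma weight_mono (hτ₀ : IsWeight τ₀) {x y : A} (hx : 0 ≤ x) (hxy : x ≤ y) :
    τ₀ x ≤ τ₀ y := by
  have h := weight_add hτ₀ hx (sub_nonneg.2 hxy)
  rw [add_sub_cancel] at h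
  rw [h]; exact le_self_add

lemma weight_zero (hτ₀ : IsWeight τ₀) {u : A} (hu : 0 ≤ u) (hfin : τ₀ u ≠ ⊤) :
    τ₀ (0 : A) = 0 := by
  have h := weight_add hτ₀ hu (le_refl (0:A))
  rw [add_zero] at h
  have h2 : τ₀ u + 0 = τ₀ u + τ₀ 0 := by rw [add_zero]; exact h
  exact ((ENNReal.add_right_inj hfin).1 h2).symm

lemma weight_smul (hτ₀ : IsWeight τ₀) {u : A} (hu : 0 ≤ u) {c : ℝ} (hc : 0 < c)
    (hfin : τ₀ u ≠ ⊤) : τ₀ (c • u) = ENNReal.ofReal c * τ₀ u := by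
  have h := hτ₀ c hc u 0 hu (le_refl (0:A))
  rw [add_zero, weight_zero hτ₀ hu hfin, add_zero, real_smul_eq] at h
  exact h

-- positive functional basics
lemma pf_re_nonneg {ψ : A →ₗ[ℂ] ℂ} (hψ : IsPosFunctional ψ) {u : A} (hu : 0 ≤ u) :
    0 ≤ (ψ u).re := by
  obtain ⟨r, hr, hru⟩ := hψ u hu
  rw [hru]; simpa using hr

lemma pf_im_zero {ψ : A →ₗ[ℂ] ℂ} (hψ : IsPosFunctional ψ) {u : A} (hu : 0 ≤ u) :
    (ψ u).im = 0 := by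
  obtain ⟨r, hr, hru⟩ := hψ u hu
  rw [hru]; simp

lemma pf_mono {ψ : A →ₗ[ℂ] ℂ} (hψ : IsPosFunctional ψ) {x y : A} (hxy : x ≤ y) :
    (ψ x).re ≤ (ψ y).re := by
  have h : y = x + (y - x) := by abel
  have h2 : ψ y = ψ x + ψ (y - x) := by rw [← map_add]; exact congrArg ψ h
  have h3 := pf_re_nonneg hψ (sub_nonneg.2 hxy)
  rw [h2, Complex.add_re]; linarith

lemma pf_smul_re (ψ : A →ₗ[ℂ] ℂ) (c : ℝ) (x : A) : (ψ (c • x)).re = c * (ψ x).re := by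
  rw [LinearMap.map_smul_of_tower]
  simp [Complex.smul_re]

lemma one_nonneg : (0 : A) ≤ 1 := by simpa using star_mul_self_nonneg (1 : A)

lemma pf_smul_one_re {ψ : A →ₗ[ℂ] ℂ} (c : ℝ) : (ψ (c • (1:A))).re = c * (ψ 1).re :=
  pf_smul_re ψ c 1

-- scalar multiples of positives are positive
lemma smul_nonneg' {c : ℝ} (hc : 0 ≤ c) {a : A} (ha : 0 ≤ a) : 0 ≤ c • a := by
  have key : (Real.sqrt c • (1:A)) * a * (Real.sqrt c • (1:A)) = c • a := by
    rw [smul_mul_assoc, one_mul, mul_smul_comm, mul_one, smul_smul, Real.mul_self_sqrt hc]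
  have h := star_left_conjugate_nonneg ha (Real.sqrt c • (1:A))
  rwa [star_smul, star_trivial, star_one, key] at h

lemma selfadjoint_le_norm {y : A} (hy : IsSelfAdjoint y) : y ≤ ‖y‖ • (1:A) := by
  have := IsSelfAdjoint.le_algebraMap_norm_self (a := y)
  rwa [Algebra.algebraMap_eq_smul_one] at this


-- CFC layer
lemma key_ops {u : A} (hu : 0 ≤ u) {γ η : ℝ} (hγ : 0 ≤ γ) (hη : 0 < η) :
    ∃ X Y : A, IsSelfAdjoint X ∧ IsSelfAdjoint Y ∧ X + Y = 1 ∧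
      Y * (u + γ • (1:A)) * Y ≤ (γ + η) • (1:A) ∧ X * (u + γ • (1:A)) * X ≤ u := by
  have hsa : IsSelfAdjoint u := IsSelfAdjoint.of_nonneg hu
  set c : ℝ := γ + η with hc
  have hcpos : 0 < c := by positivity
  have hspec : ∀ t ∈ spectrum ℝ u, 0 ≤ t := fun t ht => spectrum_nonneg_of_nonneg hu ht
  have hne : ∀ t ∈ spectrum ℝ u, t + c ≠ 0 := fun t ht => by
    have := hspec t ht; positivity
  set f : ℝ → ℝ := fun t => t / (t + c) with hf
  have hfc : ContinuousOn f (spectrum ℝ u) := by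
    apply ContinuousOn.div continuousOn_id (by fun_prop) hne
  have hgc : ContinuousOn (fun t : ℝ => 1 - f t) (spectrum ℝ u) :=
    (continuousOn_const).sub hfc
  have hSc : ContinuousOn (fun t : ℝ => t + γ) (spectrum ℝ u) := by fun_prop
  set X : A := cfc f u with hX
  set Y : A := cfc (fun t => 1 - f t) u with hY
  have hXsa : IsSelfAdjoint X := cfc_predicate f u
  have hYsa : IsSelfAdjoint Y := cfc_predicate _ u
  have hXY : X + Y = 1 := by
    rw [hX, hY, ← cfc_add u f _ hfc hgc]
    have heq1 : (fun t => f t + (1 - f t)) = fun _ : ℝ => (1:ℝ) := by funext t; ring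
    rw [heq1, cfc_const 1 u hsa, map_one]
  have hS : u + γ • (1:A) = cfc (fun t : ℝ => t + γ) u := by
    symm
    rw [cfc_add u (fun t => t) (fun _ => γ) continuousOn_id continuousOn_const,
      cfc_id' ℝ u hsa, cfc_const γ u hsa, Algebra.algebraMap_eq_smul_one]
  refine ⟨X, Y, hXsa, hYsa, hXY, ?_, ?_⟩
  · -- Y * S * Y ≤ (γ+η) • 1
    have hmulY : cfc (fun t => (1 - f t) * ((t + γ) * (1 - f t))) u
        = Y * (u + γ • (1:A)) * Y := by
      have e1 : cfc (fun t => (1 - f t) * ((t + γ) * (1 - f t))) u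
          = cfc (fun t => 1 - f t) u * cfc (fun t => (t + γ) * (1 - f t)) u :=
        cfc_mul (fun t => 1 - f t) (fun t => (t + γ) * (1 - f t)) u hgc (hSc.mul hgc)
      have e2 : cfc (fun t => (t + γ) * (1 - f t)) u
          = cfc (fun t => t + γ) u * cfc (fun t => 1 - f t) u :=
        cfc_mul (fun t => t + γ) (fun t => 1 - f t) u hSc hgc
      rw [e1, e2, ← hY, ← hS, mul_assoc]
    rw [← hmulY]
    calc cfc (fun t => (1 - f t) * ((t + γ) * (1 - f t))) u
        ≤ cfc (fun _ : ℝ => c) u := by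
          apply cfc_mono
          · intro t ht
            have ht0 := hspec t ht
            have htc : 0 < t + c := by positivity
            have h1f : 1 - f t = c / (t + c) := by
              simp only [hf]
              rw [← div_self htc.ne', div_sub_div_same, add_sub_cancel_left]
            rw [h1f]
            have hd1 : c / (t + c) ≤ 1 := by
              rw [div_le_one htc]; linarith
            have h2 : (t + γ) * (c / (t + c)) ≤ c := by
              rw [show (t + γ) * (c / (t + c)) = ((t + γ) * c) / (t + c) from by ring,
                div_le_iff₀ htc]
              nlinarith [mul_nonneg hcpos.le hη.le, mul_nonneg ht0 hcpos.le]
            calc c / (t + c) * ((t + γ) * (c / (t + c))) ≤ 1 * c := by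
                  apply mul_le_mul hd1 h2 (by positivity) one_pos.le
              _ = c := one_mul c
          · exact hgc.mul (hSc.mul hgc)
          · exact continuousOn_const
      _ = (γ + η) • (1:A) := by
          rw [cfc_const c u hsa, Algebra.algebraMap_eq_smul_one, hc]
  · -- X * S * X ≤ u
    have hmulX : cfc (fun t => f t * ((t + γ) * f t)) u
        = X * (u + γ • (1:A)) * X := by
      have e1 : cfc (fun t => f t * ((t + γ) * f t)) u
          = cfc f u * cfc (fun t => (t + γ) * f t) u :=
        cfc_mul f (fun t => (t + γ) * f t) u hfc (hSc.mul hfc)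
      have e2 : cfc (fun t => (t + γ) * f t) u
          = cfc (fun t => t + γ) u * cfc f u :=
        cfc_mul (fun t => t + γ) f u hSc hfc
      rw [e1, e2, ← hX, ← hS, mul_assoc]
    rw [← hmulX]
    calc cfc (fun t => f t * ((t + γ) * f t)) u
        ≤ cfc (fun t : ℝ => t) u := by
          apply cfc_mono
          · intro t ht
            have ht0 := hspec t ht
            have htc : 0 < t + c := by positivity
            simp only [hf]
            have hd1 : t / (t + c) ≤ 1 := by
              rw [div_le_one htc]; linarith
            have h2 : (t + γ) * (t / (t + c)) ≤ t := by
              rw [show (t + γ) * (t / (t + c)) = ((t + γ) * t) / (t + c) from by ring,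
                div_le_iff₀ htc]
              nlinarith [mul_nonneg ht0 hη.le, mul_nonneg ht0 hγ]
            calc t / (t + c) * ((t + γ) * (t / (t + c))) ≤ 1 * t := by
                  apply mul_le_mul hd1 h2 (by positivity) one_pos.le
              _ = t := one_mul t
          · exact hfc.mul (hSc.mul hfc)
          · exact continuousOn_id
      _ = u := cfc_id' ℝ u hsa

-- decomposition inequality
lemma conj_decomp {p X Y : A} (hp : 0 ≤ p) (hX : IsSelfAdjoint X) (hY : IsSelfAdjoint Y)
    (hXY : X + Y = 1) {δ : ℝ} (hδ : 0 < δ) :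
    p ≤ (1 + δ) • (X * p * X) + (1 + δ⁻¹) • (Y * p * Y) := by
  have hz0 : 0 ≤ star (δ • X - Y) * p * (δ • X - Y) := star_left_conjugate_nonneg hp _
  have hzsa : star (δ • X - Y) = δ • X - Y := by
    rw [star_sub, star_smul, star_trivial, hX.star_eq, hY.star_eq]
  rw [hzsa] at hz0
  rw [← sub_nonneg]
  have hkey : (1 + δ) • (X * p * X) + (1 + δ⁻¹) • (Y * p * Y) - p
      = δ⁻¹ • ((δ • X - Y) * p * (δ • X - Y)) := by
    have hp' : p = (X + Y) * p * (X + Y) := by rw [hXY, one_mul, mul_one]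
    nth_rewrite 3 [hp']
    simp only [sub_mul, mul_sub, add_mul, mul_add, smul_mul_assoc, mul_smul_comm,
      smul_sub, smul_add, smul_smul]
    match_scalars
    all_goals field_simp
    all_goals ring
  rw [hkey]
  exact smul_nonneg (by positivity) hz0



lemma main_estimate (hτ₀ : IsWeight τ₀) {a b : A} (ha : 0 ≤ a) (hb : 0 ≤ b)
    {φ ψ : A →ₗ[ℂ] ℂ} (hφ : IsPosFunctional φ) (hφd : DomBy φ τ₀)
    (hψ : IsPosFunctional ψ) (hψd : DomBy ψ τ₀)
    {u v : A} {t α β γ : ℝ} (hu : 0 ≤ u) (hv : 0 ≤ v) (ht : 0 ≤ t)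
    (hα : 0 ≤ α) (hβ : 0 ≤ β) (hγ : 0 ≤ γ)
    (hcase : τ₀ u ≤ ENNReal.ofReal t ∨ (u = 0 ∧ t = 0))
    (heq : u + γ • (1:A) = v + α • a + β • b)
    {δ : ℝ} (hδ : 0 < δ) :
    α * (φ a).re + β * (ψ b).re
      ≤ (1 + δ) * t + (1 + δ⁻¹) * (γ * ((φ 1).re + (ψ 1).re)) := by
  set K : ℝ := (φ 1).re + (ψ 1).re with hK
  have hK0 : 0 ≤ K := add_nonneg (pf_re_nonneg hφ one_nonneg) (pf_re_nonneg hψ one_nonneg)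
  have hp : 0 ≤ α • a := smul_nonneg' hα ha
  have hq : 0 ≤ β • b := smul_nonneg' hβ hb
  have hφp : (φ (α • a)).re = α * (φ a).re := pf_smul_re φ α a
  have hψq : (ψ (β • b)).re = β * (ψ b).re := pf_smul_re ψ β b
  have hδ1 : (0:ℝ) < 1 + δ := by linarith
  have hδ2 : (0:ℝ) < 1 + δ⁻¹ := by have := inv_pos.2 hδ; linarith
  rcases hcase with hfin | ⟨hu0, ht0⟩
  · -- main case
    -- claim with slack η
    have claim : ∀ η : ℝ, 0 < η →
        α * (φ a).re + β * (ψ b).re ≤ (1 + δ) * t + (1 + δ⁻¹) * ((γ + η) * K) := by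
      intro η hη
      obtain ⟨X, Y, hXsa, hYsa, hXY, hYS, hXS⟩ := key_ops hu hγ hη
      have hpq : α • a + β • b ≤ u + γ • (1:A) := by
        have hveq : (u + γ • (1:A)) - (α • a + β • b) = v := by rw [heq]; abel
        exact sub_nonneg.1 (hveq ▸ hv)
      have hpS : α • a ≤ u + γ • (1:A) := le_trans (le_add_of_nonneg_right hq) hpq
      have hqS : β • b ≤ u + γ • (1:A) := le_trans (le_add_of_nonneg_left hp) hpq
      -- conjugated positivity
      have hXpX0 : 0 ≤ X * (α • a) * X := by
        have := star_left_conjugate_nonneg hp X; rwa [hXsa.star_eq] at this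
      have hXqX0 : 0 ≤ X * (β • b) * X := by
        have := star_left_conjugate_nonneg hq X; rwa [hXsa.star_eq] at this
      -- Y-side bounds
      have hYpY : Y * (α • a) * Y ≤ (γ + η) • (1:A) := by
        have h1 := star_left_conjugate_le_conjugate hpS Y
        rw [hYsa.star_eq] at h1
        exact h1.trans hYS
      have hYqY : Y * (β • b) * Y ≤ (γ + η) • (1:A) := by
        have h1 := star_left_conjugate_le_conjugate hqS Y
        rw [hYsa.star_eq] at h1
        exact h1.trans hYS
      have hφY : (φ (Y * (α • a) * Y)).re ≤ (γ + η) * (φ 1).re := by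
        have := pf_mono hφ hYpY
        rwa [pf_smul_one_re] at this
      have hψY : (ψ (Y * (β • b) * Y)).re ≤ (γ + η) * (ψ 1).re := by
        have := pf_mono hψ hYqY
        rwa [pf_smul_one_re] at this
      -- X-side budget
      have hXsum : X * (α • a) * X + X * (β • b) * X ≤ u := by
        have h2 := star_left_conjugate_le_conjugate hpq X
        rw [hXsa.star_eq] at h2
        have h3 : X * (α • a + β • b) * X = X * (α • a) * X + X * (β • b) * X := by
          rw [mul_add, add_mul]
        rw [← h3]
        exact h2.trans hXS
      have hbudget : (φ (X * (α • a) * X)).re + (ψ (X * (β • b) * X)).re ≤ t := by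
        have e1 := hφd _ hXpX0
        have e2 := hψd _ hXqX0
        have e3 : τ₀ (X * (α • a) * X) + τ₀ (X * (β • b) * X)
            = τ₀ (X * (α • a) * X + X * (β • b) * X) :=
          (weight_add hτ₀ hXpX0 hXqX0).symm
        have e4 : τ₀ (X * (α • a) * X + X * (β • b) * X) ≤ τ₀ u :=
          weight_mono hτ₀ (add_nonneg hXpX0 hXqX0) hXsum
        have e5 : ENNReal.ofReal ((φ (X * (α • a) * X)).re + (ψ (X * (β • b) * X)).re)
            ≤ ENNReal.ofReal t := by
          rw [ENNReal.ofReal_add (pf_re_nonneg hφ hXpX0) (pf_re_nonneg hψ hXqX0)]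
          calc ENNReal.ofReal (φ (X * (α • a) * X)).re
                + ENNReal.ofReal (ψ (X * (β • b) * X)).re
              ≤ τ₀ (X * (α • a) * X) + τ₀ (X * (β • b) * X) := add_le_add e1 e2
            _ = _ := e3
            _ ≤ τ₀ u := e4
            _ ≤ ENNReal.ofReal t := hfin
        exact (ENNReal.ofReal_le_ofReal_iff ht).1 e5
      -- decomposition
      have hdecφ : (φ (α • a)).re ≤ (1 + δ) * (φ (X * (α • a) * X)).re
          + (1 + δ⁻¹) * (φ (Y * (α • a) * Y)).re := by
        have hd := conj_decomp hp hXsa hYsa hXY hδ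
        have h5 := pf_mono hφ hd
        have e : (φ ((1 + δ) • (X * (α • a) * X) + (1 + δ⁻¹) • (Y * (α • a) * Y))).re
            = (1 + δ) * (φ (X * (α • a) * X)).re + (1 + δ⁻¹) * (φ (Y * (α • a) * Y)).re := by
          rw [map_add, Complex.add_re, pf_smul_re, pf_smul_re]
        rw [e] at h5
        exact h5
      have hdecψ : (ψ (β • b)).re ≤ (1 + δ) * (ψ (X * (β • b) * X)).re
          + (1 + δ⁻¹) * (ψ (Y * (β • b) * Y)).re := by
        have hd := conj_decomp hq hXsa hYsa hXY hδ
        have h5 := pf_mono hψ hd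
        have e : (ψ ((1 + δ) • (X * (β • b) * X) + (1 + δ⁻¹) • (Y * (β • b) * Y))).re
            = (1 + δ) * (ψ (X * (β • b) * X)).re + (1 + δ⁻¹) * (ψ (Y * (β • b) * Y)).re := by
          rw [map_add, Complex.add_re, pf_smul_re, pf_smul_re]
        rw [e] at h5
        exact h5
      have m1 : (1 + δ) * ((φ (X * (α • a) * X)).re + (ψ (X * (β • b) * X)).re)
          ≤ (1 + δ) * t := mul_le_mul_of_nonneg_left hbudget hδ1.le
      have m2 : (1 + δ⁻¹) * ((φ (Y * (α • a) * Y)).re + (ψ (Y * (β • b) * Y)).re)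
          ≤ (1 + δ⁻¹) * ((γ + η) * K) := by
        apply mul_le_mul_of_nonneg_left _ hδ2.le
        rw [hK]; linarith
      rw [← hφp, ← hψq]
      nlinarith [hdecφ, hdecψ, m1, m2]
    -- let η → 0
    apply le_of_forall_pos_le_add
    intro ε hε
    set η : ℝ := ε / ((1 + δ⁻¹) * (K + 1)) with hηdef
    have hηpos : 0 < η := by
      apply div_pos hε
      positivity
    have hsmall : (1 + δ⁻¹) * (η * K) ≤ ε := by
      have e : (1 + δ⁻¹) * (η * K) = ε * (K / (K + 1)) := by
        rw [hηdef]; field_simp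
      rw [e]
      have : K / (K + 1) ≤ 1 := by
        rw [div_le_one (by positivity)]; linarith
      nlinarith
    have := claim η hηpos
    have expand : (1 + δ⁻¹) * ((γ + η) * K)
        = (1 + δ⁻¹) * (γ * K) + (1 + δ⁻¹) * (η * K) := by ring
    rw [expand] at this
    linarith
  · -- degenerate case
    subst hu0 ht0
    rw [zero_add] at heq
    have hple : α • a ≤ γ • (1:A) := by
      have hveq : γ • (1:A) - (α • a) = v + β • b := by rw [heq]; abel
      have h0 : (0:A) ≤ v + β • b := add_nonneg hv hq
      rw [← hveq] at h0
      exact sub_nonneg.1 h0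
    have hqle : β • b ≤ γ • (1:A) := by
      have hveq : γ • (1:A) - (β • b) = v + α • a := by rw [heq]; abel
      have h0 : (0:A) ≤ v + α • a := add_nonneg hv hp
      rw [← hveq] at h0
      exact sub_nonneg.1 h0
    have b1 : α * (φ a).re ≤ γ * (φ 1).re := by
      rw [← hφp]
      have := pf_mono hφ hple
      rwa [pf_smul_one_re] at this
    have b2 : β * (ψ b).re ≤ γ * (ψ 1).re := by
      rw [← hψq]
      have := pf_mono hψ hqle
      rwa [pf_smul_one_re] at this
    have hδ3 : (1:ℝ) ≤ 1 + δ⁻¹ := by have := inv_pos.2 hδ; linarith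
    have : γ * K ≤ (1 + δ⁻¹) * (γ * K) :=
      le_mul_of_one_le_left (by positivity) hδ3
    rw [hK] at this
    nlinarith [b1, b2, this]

section Cone

variable (τ₀ : A → ℝ≥0∞)

/-- The constraint cone used in the Hahn-Banach/Riesz-extension argument. -/
def coneSet (a b : A) (Fa Fb R : ℝ) : Set (A × ℝ) :=
  { z | ∃ u v w : A, ∃ t α β γ : ℝ, 0 ≤ u ∧ 0 ≤ v ∧ 0 ≤ t ∧ 0 ≤ α ∧ 0 ≤ β ∧ 0 ≤ γ ∧
      star w = -w ∧ (τ₀ u ≤ ENNReal.ofReal t ∨ (u = 0 ∧ t = 0)) ∧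
      z.1 = u + γ • (1:A) - v - α • a - β • b + w ∧
      z.2 = t + γ * R - α * Fa - β * Fb }

noncomputable def theCone (hτ₀ : IsWeight τ₀) (a b : A) (Fa Fb R : ℝ) : ConvexCone ℝ (A × ℝ) where
  carrier := coneSet τ₀ a b Fa Fb R
  smul_mem' := by
    rintro c hc z ⟨u, v, w, t, α, β, γ, hu, hv, ht, hα, hβ, hγ, hw, hcase, hz1, hz2⟩
    refine ⟨c • u, c • v, c • w, c * t, c * α, c * β, c * γ,
      smul_nonneg' hc.le hu, smul_nonneg' hc.le hv, mul_nonneg hc.le ht,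
      mul_nonneg hc.le hα, mul_nonneg hc.le hβ, mul_nonneg hc.le hγ, ?_, ?_, ?_, ?_⟩
    · rw [star_smul, star_trivial, hw, smul_neg]
    · rcases hcase with hcond | ⟨hu0, ht0⟩
      · left
        have hfin : τ₀ u ≠ ⊤ := (lt_of_le_of_lt hcond ENNReal.ofReal_lt_top).ne
        rw [weight_smul hτ₀ hu hc hfin, ENNReal.ofReal_mul hc.le]
        exact mul_le_mul_right hcond _
      · right
        exact ⟨by rw [hu0, smul_zero], by rw [ht0, mul_zero]⟩
    · show (c • z).1 = _
      rw [Prod.smul_fst, hz1]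
      module
    · show (c • z).2 = _
      rw [Prod.smul_snd, hz2]
      simp only [smul_eq_mul]
      ring
  add_mem' := by
    rintro z₁ ⟨u₁, v₁, w₁, t₁, α₁, β₁, γ₁, hu₁, hv₁, ht₁, hα₁, hβ₁, hγ₁, hw₁, hc₁, he₁, hf₁⟩
      z₂ ⟨u₂, v₂, w₂, t₂, α₂, β₂, γ₂, hu₂, hv₂, ht₂, hα₂, hβ₂, hγ₂, hw₂, hc₂, he₂, hf₂⟩
    refine ⟨u₁ + u₂, v₁ + v₂, w₁ + w₂, t₁ + t₂, α₁ + α₂, β₁ + β₂, γ₁ + γ₂,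
      add_nonneg hu₁ hu₂, add_nonneg hv₁ hv₂, add_nonneg ht₁ ht₂,
      add_nonneg hα₁ hα₂, add_nonneg hβ₁ hβ₂, add_nonneg hγ₁ hγ₂, ?_, ?_, ?_, ?_⟩
    · rw [star_add, hw₁, hw₂, neg_add]
    · rcases hc₁ with h1 | ⟨e1, e1'⟩ <;> rcases hc₂ with h2 | ⟨e2, e2'⟩
      · left
        rw [weight_add hτ₀ hu₁ hu₂, ENNReal.ofReal_add ht₁ ht₂]
        exact add_le_add h1 h2
      · left; rw [e2, e2', add_zero, add_zero]; exact h1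
      · left; rw [e1, e1', zero_add, zero_add]; exact h2
      · right; exact ⟨by rw [e1, e2, add_zero], by rw [e1', e2', add_zero]⟩
    · show (z₁ + z₂).1 = _
      rw [Prod.fst_add, he₁, he₂]
      module
    · show (z₁ + z₂).2 = _
      rw [Prod.snd_add, hf₁, hf₂]
      ring

lemma mem_theCone_iff (hτ₀ : IsWeight τ₀) (a b : A) (Fa Fb R : ℝ) (z : A × ℝ) :
    z ∈ theCone τ₀ hτ₀ a b Fa Fb R ↔ z ∈ coneSet τ₀ a b Fa Fb R := Iff.rfl

end Cone

lemma exists_good_functional {τ₀ : A → ℝ≥0∞} (hτ₀ : IsWeight τ₀) {a b : A}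
    (ha : 0 ≤ a) (hb : 0 ≤ b)
    {φ ψ : A →ₗ[ℂ] ℂ} (hφ : IsPosFunctional φ) (hφd : DomBy φ τ₀)
    (hψ : IsPosFunctional ψ) (hψd : DomBy ψ τ₀) {δ : ℝ} (hδ : 0 < δ) :
    ∃ ω : A →ₗ[ℂ] ℂ, IsPosFunctional ω ∧ DomBy ω τ₀ ∧
      (1 + δ)⁻¹ * (φ a).re ≤ (ω a).re ∧ (1 + δ)⁻¹ * (ψ b).re ≤ (ω b).re := by
  have hδ1 : (0:ℝ) < 1 + δ := by linarith
  have hδ2 : (0:ℝ) < 1 + δ⁻¹ := by have := inv_pos.2 hδ; linarith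
  set K : ℝ := (φ 1).re + (ψ 1).re with hK
  have hK0 : 0 ≤ K := add_nonneg (pf_re_nonneg hφ one_nonneg) (pf_re_nonneg hψ one_nonneg)
  set Fa : ℝ := (1 + δ)⁻¹ * (φ a).re with hFa
  set Fb : ℝ := (1 + δ)⁻¹ * (ψ b).re with hFb
  set R : ℝ := (1 + δ⁻¹) * K with hR
  set s : ConvexCone ℝ (A × ℝ) := theCone τ₀ hτ₀ a b Fa Fb R with hs
  set D : Submodule ℝ (A × ℝ) := (⊥ : Submodule ℝ A).prod (⊤ : Submodule ℝ ℝ) with hD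
  set f : (A × ℝ) →ₗ.[ℝ] ℝ := ⟨D, (LinearMap.snd ℝ A ℝ).comp D.subtype⟩ with hf
  -- membership helpers
  have mem_gen : ∀ (u v w : A) (t α β γ : ℝ), 0 ≤ u → 0 ≤ v → 0 ≤ t → 0 ≤ α → 0 ≤ β →
      0 ≤ γ → star w = -w → (τ₀ u ≤ ENNReal.ofReal t ∨ (u = 0 ∧ t = 0)) →
      ∀ z : A × ℝ, z.1 = u + γ • (1:A) - v - α • a - β • b + w →
        z.2 = t + γ * R - α * Fa - β * Fb → z ∈ s := by
    intro u v w t α β γ hu hv ht hα hβ hγ hw hcase z h1 h2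
    exact ⟨u, v, w, t, α, β, γ, hu, hv, ht, hα, hβ, hγ, hw, hcase, h1, h2⟩
  -- the nonneg hypothesis for riesz_extension (consistency)
  have nonneg : ∀ x : f.domain, (x : A × ℝ) ∈ s → 0 ≤ f x := by
    rintro ⟨⟨z1, z2⟩, hzD⟩ hzs
    have hz1 : z1 = 0 := by
      have := hzD.1
      simpa using this
    subst hz1
    obtain ⟨u, v, w, t, α, β, γ, hu, hv, ht, hα, hβ, hγ, hw, hcase, he1, he2⟩ := hzs
    simp only [] at he1 he2
    -- show w = 0
    have hwexp : w = v + α • a + β • b - u - γ • (1:A) := by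
      rw [← sub_eq_zero]
      rw [show w - (v + α • a + β • b - u - γ • (1:A))
          = u + γ • (1:A) - v - α • a - β • b + w from by abel]
      exact he1.symm
    have hwsa : star w = w := by
      rw [hwexp]
      simp only [star_sub, star_add, star_smul, star_trivial, star_one,
        (IsSelfAdjoint.of_nonneg hv).star_eq, (IsSelfAdjoint.of_nonneg hu).star_eq,
        (IsSelfAdjoint.of_nonneg ha).star_eq, (IsSelfAdjoint.of_nonneg hb).star_eq]
    have hww : w = -w := hwsa.symm.trans hw
    have h2w : (2:ℝ) • w = 0 := by
      rw [two_smul]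
      nth_rewrite 1 [hww]
      exact neg_add_cancel w
    have hw0 : w = 0 := by
      have h3 := congrArg (fun z : A => (2:ℝ)⁻¹ • z) h2w
      simp only [smul_smul] at h3
      norm_num at h3
      exact h3
    have heq : u + γ • (1:A) = v + α • a + β • b := by
      rw [← sub_eq_zero]
      rw [show u + γ • (1:A) - (v + α • a + β • b)
          = u + γ • (1:A) - v - α • a - β • b + w from by rw [hw0]; abel]
      exact he1.symm
    -- apply the main estimate
    have hest := main_estimate hτ₀ ha hb hφ hφd hψ hψd hu hv ht hα hβ hγ hcase heq hδ
    -- goal : 0 ≤ f x = z2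
    have hfx : f ⟨((0:A), z2), hzD⟩ = z2 := rfl
    rw [hfx, he2]
    -- z2 = t + γ R - α Fa - β Fb ≥ 0
    have hmul := mul_le_mul_of_nonneg_left hest (inv_pos.2 hδ1).le
    have e1 : (1 + δ)⁻¹ * ((1 + δ) * t + (1 + δ⁻¹) * (γ * K))
        = t + (1 + δ)⁻¹ * ((1 + δ⁻¹) * (γ * K)) := by
      rw [mul_add, ← mul_assoc, inv_mul_cancel₀ hδ1.ne', one_mul]
    rw [e1, mul_add, mul_comm ((1+δ)⁻¹) (α * (φ a).re),
      mul_comm ((1+δ)⁻¹) (β * (ψ b).re)] at hmul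
    have e2 : α * (φ a).re * (1 + δ)⁻¹ = α * Fa := by rw [hFa]; ring
    have e3 : β * (ψ b).re * (1 + δ)⁻¹ = β * Fb := by rw [hFb]; ring
    rw [e2, e3] at hmul
    have e4 : (1 + δ)⁻¹ * ((1 + δ⁻¹) * (γ * K)) ≤ γ * R := by
      rw [hR]
      have h5 : (1 + δ)⁻¹ ≤ 1 := by
        rw [inv_le_one₀ hδ1]; linarith
      have h6 : 0 ≤ (1 + δ⁻¹) * (γ * K) := by positivity
      nlinarith
    linarith
  -- density
  have dense : ∀ y : A × ℝ, ∃ x : f.domain, (x : A × ℝ) + y ∈ s := by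
    rintro ⟨y1, y2⟩
    set xsa : A := (2:ℝ)⁻¹ • (y1 + star y1) with hxsa
    have hxsa_sa : IsSelfAdjoint xsa := by
      rw [hxsa]
      simp only [IsSelfAdjoint, star_smul, star_trivial, star_add, star_star]
      rw [add_comm]
    set w : A := y1 - xsa with hwdef
    have h2xsa : xsa + xsa = y1 + star y1 := by
      rw [hxsa, ← two_smul ℝ, smul_smul]
      norm_num
    have hw_skew : star w = -w := by
      rw [hwdef, star_sub, hxsa_sa.star_eq, neg_sub]
      rw [sub_eq_sub_iff_add_eq_add, h2xsa, add_comm]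
    have hv0 : (0:A) ≤ ‖xsa‖ • (1:A) - xsa := sub_nonneg.2 (selfadjoint_le_norm hxsa_sa)
    have hmemD : ((0:A), ‖xsa‖ * R - y2) ∈ D := by
      constructor
      · exact Submodule.zero_mem _
      · trivial
    refine ⟨⟨((0:A), ‖xsa‖ * R - y2), hmemD⟩, ?_⟩
    apply mem_gen 0 (‖xsa‖ • (1:A) - xsa) w 0 0 0 ‖xsa‖ (le_refl _) hv0 (le_refl _)
      (le_refl _) (le_refl _) (norm_nonneg _) hw_skew (Or.inr ⟨rfl, rfl⟩)
    · show (0:A) + y1 = _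
      rw [zero_add, zero_smul, zero_smul]
      rw [show (0:A) + ‖xsa‖ • (1:A) - (‖xsa‖ • (1:A) - xsa) - 0 - 0 + w = xsa + w from by abel]
      rw [hwdef]; abel
    · show (‖xsa‖ * R - y2) + y2 = _
      ring
  -- apply Riesz extension
  obtain ⟨g, hgf, hgs⟩ := riesz_extension (s.toPointedCone (mem_gen 0 0 0 0 0 0 0 le_rfl le_rfl le_rfl le_rfl le_rfl
    le_rfl (by simp) (Or.inr ⟨rfl, rfl⟩) 0 (by simp) (by simp))) f nonneg dense
  have hg0r : ∀ r : ℝ, g ((0:A), r) = r := by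
    intro r
    have hm : ((0:A), r) ∈ D := ⟨Submodule.zero_mem _, trivial⟩
    have := hgf ⟨((0:A), r), hm⟩
    exact this.trans rfl
  set ω₀ : A →ₗ[ℝ] ℝ := -(g.comp (LinearMap.inl ℝ A ℝ)) with hω₀
  have hω₀app : ∀ z : A, ω₀ z = -(g (z, 0)) := fun z => rfl
  have hkey : ∀ (z : A) (r : ℝ), ((z, r) : A × ℝ) ∈ s → ω₀ z ≤ r := by
    intro z r hz
    have h1 := hgs (z, r) hz
    have h2 : ((z, r) : A × ℝ) = ((z, 0) : A × ℝ) + ((0:A), r) := by simp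
    rw [h2, map_add, hg0r] at h1
    rw [hω₀app]
    linarith
  -- properties of ω₀
  have hpos : ∀ z : A, 0 ≤ z → 0 ≤ ω₀ z := by
    intro z hz
    have hmem : ((-z, 0) : A × ℝ) ∈ s := by
      apply mem_gen 0 z 0 0 0 0 0 (le_refl _) hz (le_refl _) (le_refl _) (le_refl _)
        (le_refl _) (by simp) (Or.inr ⟨rfl, rfl⟩)
      · show -z = (0:A) + (0:ℝ) • (1:A) - z - (0:ℝ) • a - (0:ℝ) • b + 0
        simp
      · show (0:ℝ) = 0 + 0 * R - 0 * Fa - 0 * Fb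
        ring
    have := hkey (-z) 0 hmem
    rw [map_neg] at this
    linarith
  have hdom : ∀ z : A, 0 ≤ z → ENNReal.ofReal (ω₀ z) ≤ τ₀ z := by
    intro z hz
    by_cases hfin : τ₀ z = ⊤
    · rw [hfin]; exact le_top
    · have hmem : ((z, (τ₀ z).toReal) : A × ℝ) ∈ s := by
        apply mem_gen z 0 0 (τ₀ z).toReal 0 0 0 hz (le_refl _) ENNReal.toReal_nonneg
          (le_refl _) (le_refl _) (le_refl _) (by simp)
          (Or.inl (le_of_eq (ENNReal.ofReal_toReal hfin).symm))
        · show z = z + (0:ℝ) • (1:A) - 0 - (0:ℝ) • a - (0:ℝ) • b + 0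
          simp
        · show (τ₀ z).toReal = (τ₀ z).toReal + 0 * R - 0 * Fa - 0 * Fb
          ring
      have h1 := hkey z (τ₀ z).toReal hmem
      calc ENNReal.ofReal (ω₀ z) ≤ ENNReal.ofReal (τ₀ z).toReal := ENNReal.ofReal_le_ofReal h1
        _ = τ₀ z := ENNReal.ofReal_toReal hfin
  have hskew0 : ∀ z : A, star z = -z → ω₀ z = 0 := by
    intro z hz
    have hm1 : ((z, 0) : A × ℝ) ∈ s := by
      apply mem_gen 0 0 z 0 0 0 0 (le_refl _) (le_refl _) (le_refl _) (le_refl _)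
        (le_refl _) (le_refl _) hz (Or.inr ⟨rfl, rfl⟩)
      · show z = (0:A) + (0:ℝ) • (1:A) - 0 - (0:ℝ) • a - (0:ℝ) • b + z
        simp
      · show (0:ℝ) = 0 + 0 * R - 0 * Fa - 0 * Fb
        ring
    have hm2 : ((-z, 0) : A × ℝ) ∈ s := by
      apply mem_gen 0 0 (-z) 0 0 0 0 (le_refl _) (le_refl _) (le_refl _) (le_refl _)
        (le_refl _) (le_refl _) (by rw [star_neg, hz, neg_neg]) (Or.inr ⟨rfl, rfl⟩)
      · show -z = (0:A) + (0:ℝ) • (1:A) - 0 - (0:ℝ) • a - (0:ℝ) • b + -z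
        simp
      · show (0:ℝ) = 0 + 0 * R - 0 * Fa - 0 * Fb
        ring
    have h1 := hkey z 0 hm1
    have h2 := hkey (-z) 0 hm2
    rw [map_neg] at h2
    linarith
  have hωa : Fa ≤ ω₀ a := by
    have hmem : ((-a, -Fa) : A × ℝ) ∈ s := by
      apply mem_gen 0 0 0 0 1 0 0 (le_refl _) (le_refl _) (le_refl _) zero_le_one
        (le_refl _) (le_refl _) (by simp) (Or.inr ⟨rfl, rfl⟩)
      · show -a = (0:A) + (0:ℝ) • (1:A) - 0 - (1:ℝ) • a - (0:ℝ) • b + 0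
        simp
      · show -Fa = 0 + 0 * R - 1 * Fa - 0 * Fb
        ring
    have := hkey (-a) (-Fa) hmem
    rw [map_neg] at this
    linarith
  have hωb : Fb ≤ ω₀ b := by
    have hmem : ((-b, -Fb) : A × ℝ) ∈ s := by
      apply mem_gen 0 0 0 0 0 1 0 (le_refl _) (le_refl _) (le_refl _) (le_refl _)
        zero_le_one (le_refl _) (by simp) (Or.inr ⟨rfl, rfl⟩)
      · show -b = (0:A) + (0:ℝ) • (1:A) - 0 - (0:ℝ) • a - (1:ℝ) • b + 0
        simp
      · show -Fb = 0 + 0 * R - 0 * Fa - 1 * Fb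
        ring
    have := hkey (-b) (-Fb) hmem
    rw [map_neg] at this
    linarith
  -- complexify
  set ω : A →ₗ[ℂ] ℂ := LinearMap.extendTo𝕜' ω₀ with hω
  have hre : ∀ x : A, (ω x).re = ω₀ x := by
    intro x
    rw [hω, LinearMap.extendTo𝕜', Module.Dual.extendRCLike_apply]
    simp
  have hval : ∀ z : A, IsSelfAdjoint z → ω z = ((ω₀ z : ℝ) : ℂ) := by
    intro z hzsa
    rw [hω, LinearMap.extendTo𝕜', Module.Dual.extendRCLike_apply]
    have hIz : star ((RCLike.I : ℂ) • z) = -((RCLike.I : ℂ) • z) := by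
      rw [star_smul, hzsa.star_eq, RCLike.star_def]
      simp [RCLike.conj_I, neg_smul]
    rw [hskew0 _ hIz]
    simp
  refine ⟨ω, ?_, ?_, ?_, ?_⟩
  · intro z hz
    exact ⟨ω₀ z, hpos z hz, hval z (IsSelfAdjoint.of_nonneg hz)⟩
  · intro z hz
    rw [hre]
    exact hdom z hz
  · rw [hre]; exact hωa
  · rw [hre]; exact hωb

-- continuity of positive functionals
lemma pf_selfadj_bounds {ψ : A →ₗ[ℂ] ℂ} (hψ : IsPosFunctional ψ) {y : A}
    (hy : IsSelfAdjoint y) : (ψ y).im = 0 ∧ |(ψ y).re| ≤ (ψ 1).re * ‖y‖ := by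
  set p : A := (2:ℝ)⁻¹ • (‖y‖ • (1:A) + y) with hpd
  set n : A := (2:ℝ)⁻¹ • (‖y‖ • (1:A) - y) with hnd
  have hyn : -y ≤ ‖y‖ • (1:A) := by
    have := selfadjoint_le_norm hy.neg
    rwa [norm_neg] at this
  have hp0 : 0 ≤ p := by
    apply smul_nonneg' (by norm_num)
    exact neg_le_iff_add_nonneg.1 hyn
  have hn0 : 0 ≤ n := by
    apply smul_nonneg' (by norm_num)
    exact sub_nonneg.2 (selfadjoint_le_norm hy)
  have hy_eq : y = p - n := by rw [hpd, hnd]; module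
  have hpn : ‖y‖ • (1:A) - p = n := by rw [hpd, hnd]; module
  have hnn : ‖y‖ • (1:A) - n = p := by rw [hpd, hnd]; module
  have hple : p ≤ ‖y‖ • (1:A) := by
    have : (0:A) ≤ ‖y‖ • (1:A) - p := hpn ▸ hn0
    exact sub_nonneg.1 this
  have hnle : n ≤ ‖y‖ • (1:A) := by
    have : (0:A) ≤ ‖y‖ • (1:A) - n := hnn ▸ hp0
    exact sub_nonneg.1 this
  have hψy : ψ y = ψ p - ψ n := by rw [hy_eq, map_sub]
  constructor
  · rw [hψy, Complex.sub_im, pf_im_zero hψ hp0, pf_im_zero hψ hn0, sub_zero]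
  · have b1 : (ψ p).re ≤ ‖y‖ * (ψ 1).re := by
      have := pf_mono hψ hple
      rwa [pf_smul_one_re] at this
    have b2 : (ψ n).re ≤ ‖y‖ * (ψ 1).re := by
      have := pf_mono hψ hnle
      rwa [pf_smul_one_re] at this
    have c1 := pf_re_nonneg hψ hp0
    have c2 := pf_re_nonneg hψ hn0
    rw [hψy, Complex.sub_re, abs_le]
    constructor <;> nlinarith

lemma pf_re_bound {ψ : A →ₗ[ℂ] ℂ} (hψ : IsPosFunctional ψ) (x : A) :
    |(ψ x).re| ≤ (ψ 1).re * ‖x‖ := by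
  set xsa : A := (2:ℝ)⁻¹ • (x + star x) with hxsa
  have hxsa_sa : IsSelfAdjoint xsa := by
    rw [hxsa]
    simp only [IsSelfAdjoint, star_smul, star_trivial, star_add, star_star]
    rw [add_comm]
  set w : A := x - xsa with hwdef
  have h2xsa : xsa + xsa = x + star x := by
    rw [hxsa, ← two_smul ℝ, smul_smul]; norm_num
  have hw_skew : star w = -w := by
    rw [hwdef, star_sub, hxsa_sa.star_eq, neg_sub]
    rw [sub_eq_sub_iff_add_eq_add, h2xsa, add_comm]
  -- w = I • yw with yw self-adjoint
  set yw : A := (-Complex.I) • w with hyw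
  have hyw_sa : IsSelfAdjoint yw := by
    rw [hyw]
    show star ((-Complex.I) • w) = (-Complex.I) • w
    rw [star_smul, hw_skew]
    simp [neg_smul, smul_neg]
  have hw_eq : w = Complex.I • yw := by
    rw [hyw, smul_smul]
    simp
  have hψw_re : (ψ w).re = 0 := by
    rw [hw_eq, map_smul, smul_eq_mul, Complex.mul_re, (pf_selfadj_bounds hψ hyw_sa).1]
    simp
  have hx_eq : x = xsa + w := by rw [hwdef]; abel
  have hre_eq : (ψ x).re = (ψ xsa).re := by
    rw [hx_eq, map_add, Complex.add_re, hψw_re, add_zero]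
  rw [hre_eq]
  have hnorm : ‖xsa‖ ≤ ‖x‖ := by
    rw [hxsa]
    calc ‖(2:ℝ)⁻¹ • (x + star x)‖ = ‖(2:ℝ)⁻¹‖ * ‖x + star x‖ := norm_smul _ _
      _ ≤ ‖(2:ℝ)⁻¹‖ * (‖x‖ + ‖star x‖) := by
          apply mul_le_mul_of_nonneg_left (norm_add_le _ _) (norm_nonneg _)
      _ = ‖x‖ := by rw [norm_star]; simp [Real.norm_eq_abs]; ring
  calc |(ψ xsa).re| ≤ (ψ 1).re * ‖xsa‖ := (pf_selfadj_bounds hψ hxsa_sa).2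
    _ ≤ (ψ 1).re * ‖x‖ :=
        mul_le_mul_of_nonneg_left hnorm (pf_re_nonneg hψ one_nonneg)

lemma pf_continuous {ψ : A →ₗ[ℂ] ℂ} (hψ : IsPosFunctional ψ) :
    Continuous fun x : A => (ψ x).re := by
  set L : A →ₗ[ℝ] ℝ := Complex.reLm.comp (LinearMap.restrictScalars ℝ ψ) with hL
  have hbound : ∀ x : A, ‖L x‖ ≤ (ψ 1).re * ‖x‖ := by
    intro x
    rw [Real.norm_eq_abs]
    exact pf_re_bound hψ x
  exact (LinearMap.mkContinuous L ((ψ 1).re) hbound).continuous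

end Stmt4Aux

open Stmt4Aux in
/-- Corollary 3.3.2: the semicontinuous regularization of a weight is a weight, it is
lower semicontinuous on the positive cone, and is dominated by the original weight
(in particular its domain contains the domain of the original weight). -/
theorem stmt4 (τ₀ : A → ℝ≥0∞) (hτ₀ : IsWeight τ₀) :
    IsWeight (reg τ₀) ∧
    LowerSemicontinuousOn (reg τ₀) {a : A | 0 ≤ a} ∧
    (∀ a : A, 0 ≤ a → reg τ₀ a ≤ τ₀ a) ∧
    (∀ a : A, 0 ≤ a → τ₀ a < ⊤ → reg τ₀ a < ⊤) := by
  have hdom : ∀ a : A, 0 ≤ a → reg τ₀ a ≤ τ₀ a := by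
    intro a ha
    simp only [reg]
    exact iSup₂_le fun ψ hψ => hψ.2 a ha
  refine ⟨?_, ?_, hdom, fun a ha hfin => lt_of_le_of_lt (hdom a ha) hfin⟩
  · -- IsWeight
    intro c hc a b ha hb
    have hre : ∀ (ω : A →ₗ[ℂ] ℂ), (ω ((c:ℂ) • a + b)).re = c * (ω a).re + (ω b).re := by
      intro ω
      rw [map_add, map_smul, Complex.add_re, smul_eq_mul, Complex.mul_re]
      simp
    apply le_antisymm
    · -- ≤
      simp only [reg]
      refine iSup₂_le fun ω hω => ?_
      rw [hre ω, ENNReal.ofReal_add (mul_nonneg hc.le (pf_re_nonneg hω.1 ha))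
        (pf_re_nonneg hω.1 hb), ENNReal.ofReal_mul hc.le]
      exact add_le_add
        (mul_le_mul_right
          (le_iSup₂ (f := fun (χ : A →ₗ[ℂ] ℂ) (_ : IsPosFunctional χ ∧ DomBy χ τ₀) =>
            ENNReal.ofReal (χ a).re) ω hω) _)
        (le_iSup₂ (f := fun (χ : A →ₗ[ℂ] ℂ) (_ : IsPosFunctional χ ∧ DomBy χ τ₀) =>
            ENNReal.ofReal (χ b).re) ω hω)
    · -- ≥
      simp only [reg]
      haveI : Nonempty (A →ₗ[ℂ] ℂ) := ⟨0⟩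
      simp only [ENNReal.mul_iSup]
      rw [ENNReal.iSup_add]
      refine iSup_le fun φ => ?_
      rw [ENNReal.add_iSup]
      refine iSup_le fun ψ => ?_
      by_cases hφP : IsPosFunctional φ ∧ DomBy φ τ₀
      · by_cases hψP : IsPosFunctional ψ ∧ DomBy ψ τ₀
        · rw [iSup_pos hφP, iSup_pos hψP]
          -- core case
          set V : ℝ := c * (φ a).re + (ψ b).re with hV
          have hVa : 0 ≤ c * (φ a).re := mul_nonneg hc.le (pf_re_nonneg hφP.1 ha)
          have hVb : 0 ≤ (ψ b).re := pf_re_nonneg hψP.1 hb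
          rw [← ENNReal.ofReal_mul hc.le, ← ENNReal.ofReal_add hVa hVb, ← hV]
          have key : ∀ n : ℕ,
              ENNReal.ofReal ((1 + 1/((n:ℝ)+1))⁻¹ * V)
                ≤ ⨆ (ω : A →ₗ[ℂ] ℂ) (_ : IsPosFunctional ω ∧ DomBy ω τ₀),
                    ENNReal.ofReal (ω ((c:ℂ) • a + b)).re := by
            intro n
            have hδ : (0:ℝ) < 1/((n:ℝ)+1) := by positivity
            obtain ⟨ω, hω1, hω2, hωa, hωb⟩ :=
              exists_good_functional hτ₀ ha hb hφP.1 hφP.2 hψP.1 hψP.2 hδ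
            refine le_trans ?_ (le_iSup₂ ω ⟨hω1, hω2⟩)
            apply ENNReal.ofReal_le_ofReal
            rw [hre ω]
            calc (1 + 1/((n:ℝ)+1))⁻¹ * V
                = c * ((1 + 1/((n:ℝ)+1))⁻¹ * (φ a).re)
                  + (1 + 1/((n:ℝ)+1))⁻¹ * (ψ b).re := by rw [hV]; ring
              _ ≤ c * (ω a).re + (ω b).re :=
                  add_le_add (mul_le_mul_of_nonneg_left hωa hc.le) hωb
          have hlim : Filter.Tendsto (fun n : ℕ => ENNReal.ofReal ((1 + 1/((n:ℝ)+1))⁻¹ * V))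
              Filter.atTop (nhds (ENNReal.ofReal V)) := by
            have t0 : Filter.Tendsto (fun n : ℕ => 1 + 1/((n:ℝ)+1)) Filter.atTop (nhds 1) := by
              have h := tendsto_one_div_add_atTop_nhds_zero_nat (𝕜 := ℝ)
              have := Filter.Tendsto.const_add (1:ℝ) h
              simpa using this
            have t1 : Filter.Tendsto (fun n : ℕ => (1 + 1/((n:ℝ)+1))⁻¹ * V)
                Filter.atTop (nhds V) := by
              have t2 := (t0.inv₀ one_ne_zero).mul_const V
              simpa using t2
            exact (ENNReal.continuous_ofReal.tendsto V).comp t1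
          exact le_of_tendsto hlim (Filter.Eventually.of_forall key)
        · -- ψ not admissible
          rw [iSup_neg hψP]
          rw [show (⊥ : ℝ≥0∞) = 0 from rfl, add_zero, iSup_pos hφP]
          refine le_trans ?_
            (le_iSup₂ (f := fun (χ : A →ₗ[ℂ] ℂ) (_ : IsPosFunctional χ ∧ DomBy χ τ₀) =>
              ENNReal.ofReal (χ ((c:ℂ) • a + b)).re) φ hφP)
          rw [← ENNReal.ofReal_mul hc.le]
          apply ENNReal.ofReal_le_ofReal
          rw [hre φ]
          have := pf_re_nonneg hφP.1 hb
          linarith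
      · rw [iSup_neg hφP]
        rw [show (⊥ : ℝ≥0∞) = 0 from rfl, zero_add]
        by_cases hψP : IsPosFunctional ψ ∧ DomBy ψ τ₀
        · rw [iSup_pos hψP]
          refine le_trans ?_
            (le_iSup₂ (f := fun (χ : A →ₗ[ℂ] ℂ) (_ : IsPosFunctional χ ∧ DomBy χ τ₀) =>
              ENNReal.ofReal (χ ((c:ℂ) • a + b)).re) ψ hψP)
          apply ENNReal.ofReal_le_ofReal
          rw [hre ψ]
          have := mul_nonneg hc.le (pf_re_nonneg hψP.1 ha)
          linarith
        · rw [iSup_neg hψP]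
          simp
  · -- lower semicontinuity
    apply LowerSemicontinuous.lowerSemicontinuousOn
    have : reg τ₀ = fun x : A =>
        ⨆ (ψ : A →ₗ[ℂ] ℂ) (_ : IsPosFunctional ψ ∧ DomBy ψ τ₀),
          ENNReal.ofReal (ψ x).re := rfl
    rw [this]
    apply lowerSemicontinuous_iSup
    intro ψ
    by_cases hψP : IsPosFunctional ψ ∧ DomBy ψ τ₀
    · have heq : (fun x : A => ⨆ (_ : IsPosFunctional ψ ∧ DomBy ψ τ₀),
          ENNReal.ofReal (ψ x).re) = fun x : A => ENNReal.ofReal (ψ x).re := by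
        funext x
        rw [iSup_pos hψP]
      rw [heq]
      apply Continuous.lowerSemicontinuous
      exact ENNReal.continuous_ofReal.comp (pf_continuous hψP.1)
    · have heq : (fun x : A => ⨆ (_ : IsPosFunctional ψ ∧ DomBy ψ τ₀),
          ENNReal.ofReal (ψ x).re) = fun _ : A => (⊥ : ℝ≥0∞) := by
        funext x
        rw [iSup_neg hψP]
      rw [heq]
      exact lowerSemicontinuous_const
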